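/- In any fold word generated by a BFB process, the order in which distinct fold symbols first appear (reading left to right) coincides with the evolutionary (temporal) order of the corresponding BFB events in the reduced BFB sequence. -/

import Mathlib

/-- Fold words generated by the BFB process: `W₁ = 010` and
`Wᵢ = Wᵢ₋₁(bᵢ) · i · Wᵢ₋₁(bᵢ)⁻¹`, where `W(b)` is the length-`b` prefix and
`⁻¹` is reversal. -/
inductive FoldWord : ℕ → List ℕ → Prop
  | base : FoldWord 1 [0, 1, 0]
  | step {n W b} : FoldWord n W → 1 ≤ b → b ≤ W.length →
      FoldWord (n + 1) (W.take b ++ [n + 1] ++ (W.take b).reverse)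

lemma foldword_le {n : ℕ} {W : List ℕ} (h : FoldWord n W) : ∀ x ∈ W, x ≤ n := by
  induction h with
  | base => intro x hx; simp at hx; rcases hx with h | h | h <;> omega
  | @step n W b h hb hbl ih =>
    intro x hx
    simp only [List.mem_append, List.mem_reverse, List.mem_singleton] at hx
    rcases hx with (hx | hx) | hx
    · exact le_trans (ih x (List.mem_of_mem_take hx)) (Nat.le_succ n)
    · omega
    · exact le_trans (ih x (List.mem_of_mem_take hx)) (Nat.le_succ n)

/-- In any fold word generated by a BFB process, the order in which the
distinct fold symbols first appear (reading left to right) coincides with the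
temporal order of the corresponding BFB events: for fold symbols `j < i` both
still occurring in the word, the first occurrence of `j` precedes the first
occurrence of `i`. -/
theorem foldword_first_occurrence_order {n : ℕ} {W : List ℕ} (h : FoldWord n W) :
    ∀ i j : ℕ, 1 ≤ j → j < i → i ∈ W → j ∈ W → W.idxOf j < W.idxOf i := by
  induction h with
  | base =>
    intro i j hj hji hi _
    simp at hi; rcases hi with h | h | h <;> omega
  | @step n W b h hb hbl ih =>
    intro i j hj hji hi hjW
    set T := W.take b with hT
    have hle : ∀ x ∈ T, x ≤ n := fun x hx => foldword_le h x (List.mem_of_mem_take hx)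
    have hnT : (n + 1) ∉ T := fun hc => by have := hle _ hc; omega
    -- membership analysis
    have memT : ∀ x : ℕ, x ∈ T ++ [n + 1] ++ T.reverse → x ≠ n + 1 → x ∈ T := by
      intro x hx hne
      simp only [List.mem_append, List.mem_reverse, List.mem_singleton] at hx
      rcases hx with (hx | hx) | hx
      · exact hx
      · exact absurd hx hne
      · exact hx
    have hjn : j ≠ n + 1 := by
      intro hc
      have hi' : i ≤ n + 1 :=
        foldword_le (FoldWord.step h hb hbl) i hi
      omega
    have hjT : j ∈ T := memT j hjW hjn
    have hjidx : (T ++ [n + 1] ++ T.reverse).idxOf j = T.idxOf j := by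
      rw [List.append_assoc, List.idxOf_append_of_mem hjT]
    by_cases hii : i = n + 1
    · subst hii
      have : (T ++ [n + 1] ++ T.reverse).idxOf (n + 1) = T.length := by
        rw [List.append_assoc, List.idxOf_append_of_notMem hnT]
        simp
      rw [hjidx, this]
      exact List.idxOf_lt_length_iff.2 hjT
    · have hiT : i ∈ T := memT i hi hii
      have hiidx : (T ++ [n + 1] ++ T.reverse).idxOf i = T.idxOf i := by
        rw [List.append_assoc, List.idxOf_append_of_mem hiT]
      rw [hjidx, hiidx]
      have hWdec : W = T ++ W.drop b := (List.take_append_drop b W).symm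
      have hiW : i ∈ W := List.mem_of_mem_take hiT
      have hjW' : j ∈ W := List.mem_of_mem_take hjT
      have e1 : W.idxOf j = T.idxOf j := by
        conv_lhs => rw [hWdec]
        exact List.idxOf_append_of_mem hjT
      have e2 : W.idxOf i = T.idxOf i := by
        conv_lhs => rw [hWdec]
        exact List.idxOf_append_of_mem hiT
      have := ih i j hj hji hiW hjW'
      omega
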